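/- Let n ≥ 2, let f : (ℝᵈ)ⁿ → ℝᵈ be continuously differentiable, fix x₁, …, xₙ ∈ ℝᵈ, set x = (x₁, …, xₙ), and let h(z) = 𝒜₂(f, id)(x₁, …, x_{n−1}, z). Then the Fréchet derivative Dh(xₙ) is injective if and only if the linear map v ↦ (∂f/∂xₙ(x) v, ∂f/∂x_{n−1}((σf)(x)) v) is injective, i.e., if and only if ker ∂f/∂xₙ(x) ∩ ker ∂f/∂x_{n−1}((σf)(x)) = {0}; moreover the ranks of these two linear maps are equal. -/

import Mathlib

/-- The shift of `f : Xⁿ⁺¹ → X`: `(σf)(x₁, …, xₙ₊₁) = (x₂, …, xₙ₊₁, f(x₁, …, xₙ₊₁))`. -/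
def shift {X : Type*} {n : ℕ} (f : (Fin (n + 1) → X) → X) (x : Fin (n + 1) → X) :
    Fin (n + 1) → X :=
  Fin.snoc (fun i : Fin n => x i.succ) (f x)

/-- The `m`-th autoregression of `f` with measurements by `g`: its `k`-th component
(0-indexed) is `g ∘ f ∘ (σf)^{∘k}`. -/
def autoreg {X Y : Type*} {n : ℕ} (m : ℕ) (f : (Fin (n + 1) → X) → X) (g : X → Y)
    (x : Fin (n + 1) → X) : Fin m → Y :=
  fun k => g (f ((shift f)^[(k : ℕ)] x))

/-- `∂f/∂x_k(p)`: the Fréchet derivative at `p k` of the map obtained from `f` by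
fixing all coordinates except the `k`-th. -/
noncomputable def partialDeriv {d N : ℕ}
    (f : (Fin N → EuclideanSpace ℝ (Fin d)) → EuclideanSpace ℝ (Fin d)) (k : Fin N)
    (p : Fin N → EuclideanSpace ℝ (Fin d)) :
    EuclideanSpace ℝ (Fin d) →L[ℝ] EuclideanSpace ℝ (Fin d) :=
  fderiv ℝ (fun z => f (Function.update p k z)) (p k)

/-- The continuous linear inclusion of the `k`-th coordinate. -/
noncomputable def J {d N : ℕ} (k : Fin N) :
    EuclideanSpace ℝ (Fin d) →L[ℝ] (Fin N → EuclideanSpace ℝ (Fin d)) :=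
  .pi (Pi.single k (.id ℝ _))

@[simp] lemma J_apply {d N : ℕ} (k : Fin N) (v : EuclideanSpace ℝ (Fin d)) :
    J k v = Pi.single k v := by
  ext j
  by_cases h : j = k
  · subst h; simp [J]
  · simp [J, Pi.single_apply, h]

lemma hasFDerivAt_partial {d N : ℕ}
    {f : (Fin N → EuclideanSpace ℝ (Fin d)) → EuclideanSpace ℝ (Fin d)}
    (hf : Differentiable ℝ f) (k : Fin N) (p : Fin N → EuclideanSpace ℝ (Fin d)) :
    HasFDerivAt (fun z => f (Function.update p k z)) ((fderiv ℝ f p).comp (J k)) (p k) := by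
  have h1 : HasFDerivAt (Function.update p k) (J k) (p k) := hasFDerivAt_update p (p k)
  have h2 : HasFDerivAt f (fderiv ℝ f p) (Function.update p k (p k)) := by
    rw [Function.update_eq_self]; exact (hf p).hasFDerivAt
  exact h2.comp (p k) h1

lemma partialDeriv_eq' {d N : ℕ}
    {f : (Fin N → EuclideanSpace ℝ (Fin d)) → EuclideanSpace ℝ (Fin d)}
    (hf : Differentiable ℝ f) (k : Fin N) (p : Fin N → EuclideanSpace ℝ (Fin d)) :
    partialDeriv f k p = (fderiv ℝ f p).comp (J k) :=
  (hasFDerivAt_partial hf k p).fderiv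

/-- The derivative of `shift f` at `x`. -/
noncomputable def shiftD {d n : ℕ}
    (f : (Fin (n + 2) → EuclideanSpace ℝ (Fin d)) → EuclideanSpace ℝ (Fin d))
    (x : Fin (n + 2) → EuclideanSpace ℝ (Fin d)) :
    (Fin (n + 2) → EuclideanSpace ℝ (Fin d)) →L[ℝ] (Fin (n + 2) → EuclideanSpace ℝ (Fin d)) :=
  .pi (fun j => Fin.lastCases (fderiv ℝ f x) (fun i => ContinuousLinearMap.proj i.succ) j)

lemma hasFDerivAt_shift {d n : ℕ}
    {f : (Fin (n + 2) → EuclideanSpace ℝ (Fin d)) → EuclideanSpace ℝ (Fin d)}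
    (hf : Differentiable ℝ f) (x : Fin (n + 2) → EuclideanSpace ℝ (Fin d)) :
    HasFDerivAt (shift f) (shiftD f x) x := by
  apply hasFDerivAt_pi''
  intro j
  rw [shiftD, ContinuousLinearMap.proj_pi]
  induction j using Fin.lastCases with
  | last =>
      simp only [Fin.lastCases_last]
      simp only [shift, Fin.snoc_last]
      exact (hf x).hasFDerivAt
  | cast i =>
      simp only [Fin.lastCases_castSucc]
      simp only [shift, Fin.snoc_castSucc]
      exact hasFDerivAt_apply i.succ x

/-- For `h(z) = 𝒜₂(f, id)(x₁, …, x_{n−1}, z)`, the derivative `Dh(xₙ)` is injective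
iff `v ↦ (P v, Q v)` is injective, iff `ker P ⊓ ker Q = ⊥`, where `P = ∂f/∂xₙ(x)` and
`Q = ∂f/∂x_{n−1}((σf)(x))`; moreover `Dh(xₙ)` and `v ↦ (P v, Q v)` have equal rank.
(Here the context window has length `n + 2`.) -/
theorem fderiv_autoreg_two_injective_iff {d n : ℕ}
    (f : (Fin (n + 2) → EuclideanSpace ℝ (Fin d)) → EuclideanSpace ℝ (Fin d))
    (hf : ContDiff ℝ 1 f)
    (xs : Fin (n + 1) → EuclideanSpace ℝ (Fin d)) (xn : EuclideanSpace ℝ (Fin d)) :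
    let x : Fin (n + 2) → EuclideanSpace ℝ (Fin d) := Fin.snoc xs xn
    let P := partialDeriv f (Fin.last (n + 1)) x
    let Q := partialDeriv f ((Fin.last n).castSucc) (shift f x)
    let Dh := fderiv ℝ (fun z => autoreg 2 f id (Fin.snoc xs z)) xn
    (Function.Injective Dh ↔
        Function.Injective (fun v : EuclideanSpace ℝ (Fin d) => (P v, Q v))) ∧
      (Function.Injective Dh ↔ LinearMap.ker (P : EuclideanSpace ℝ (Fin d) →ₗ[ℝ] EuclideanSpace ℝ (Fin d)) ⊓
        LinearMap.ker (Q : EuclideanSpace ℝ (Fin d) →ₗ[ℝ] EuclideanSpace ℝ (Fin d)) = ⊥) ∧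
      Module.finrank ℝ (LinearMap.range (Dh : EuclideanSpace ℝ (Fin d) →ₗ[ℝ]
          (Fin 2 → EuclideanSpace ℝ (Fin d)))) =
        Module.finrank ℝ (LinearMap.range (P.prod Q : EuclideanSpace ℝ (Fin d) →ₗ[ℝ]
          EuclideanSpace ℝ (Fin d) × EuclideanSpace ℝ (Fin d))) := by
  intro x P Q Dh
  have hdf : Differentiable ℝ f := hf.differentiable one_ne_zero
  -- basic facts
  have hxl : x (Fin.last (n + 1)) = xn := Fin.snoc_last _ _
  have hsnoc : ∀ z, Function.update x (Fin.last (n + 1)) z = Fin.snoc xs z := fun z =>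
    Fin.update_snoc_last _ _ _
  have hux : Function.update x (Fin.last (n + 1)) xn = x := by
    rw [← hxl]; exact Function.update_eq_self _ _
  have hP : P = (fderiv ℝ f x).comp (J (Fin.last (n + 1))) :=
    partialDeriv_eq' hdf (Fin.last (n + 1)) x
  have hQ : Q = (fderiv ℝ f (shift f x)).comp (J ((Fin.last n).castSucc)) :=
    partialDeriv_eq' hdf ((Fin.last n).castSucc) (shift f x)
  set R : EuclideanSpace ℝ (Fin d) →L[ℝ] EuclideanSpace ℝ (Fin d) :=
    (fderiv ℝ f (shift f x)).comp (J (Fin.last (n + 1))) with hR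
  -- component 0
  have hc0 : HasFDerivAt (fun z => f (Fin.snoc xs z)) P xn := by
    have h := hasFDerivAt_partial hdf (Fin.last (n + 1)) x
    rw [hxl] at h
    rw [hP]
    exact h.congr_of_eventuallyEq (by filter_upwards with z using by rw [hsnoc])
  -- key computation
  have key : ∀ v : EuclideanSpace ℝ (Fin d),
      shiftD f x (J (Fin.last (n + 1)) v) =
        Pi.single ((Fin.last n).castSucc) v + Pi.single (Fin.last (n + 1)) (P v) := by
    intro v
    funext j
    induction j using Fin.lastCases with
    | last =>
        have h1 : Fin.last (n + 1) ≠ (Fin.last n).castSucc := (Fin.castSucc_lt_last _).ne'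
        simp only [shiftD, ContinuousLinearMap.pi_apply, Fin.lastCases_last, Pi.add_apply]
        rw [Pi.single_eq_of_ne h1, Pi.single_eq_same, zero_add, hP]
        simp
    | cast i =>
        have h2 : i.castSucc ≠ Fin.last (n + 1) := (Fin.castSucc_lt_last _).ne
        simp only [shiftD, ContinuousLinearMap.pi_apply, Fin.lastCases_castSucc,
          ContinuousLinearMap.proj_apply, Pi.add_apply, J_apply]
        rw [Pi.single_eq_of_ne h2, add_zero]
        have hs : i.succ = Fin.last (n + 1) ↔ i = Fin.last n := by
          rw [← Fin.succ_last, Fin.succ_inj]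
        by_cases hi : i = Fin.last n
        · subst hi
          rw [Pi.single_eq_same, Fin.succ_last, Pi.single_eq_same]
        · rw [Pi.single_eq_of_ne (fun h => hi (hs.mp h)),
            Pi.single_eq_of_ne (fun h => hi (Fin.castSucc_injective _ h))]
  -- component 1
  have hc1 : HasFDerivAt (fun z => f (shift f (Fin.snoc xs z))) (Q + R.comp P) xn := by
    have h1 : HasFDerivAt (Function.update x (Fin.last (n + 1))) (J (Fin.last (n + 1))) xn :=
      hasFDerivAt_update (𝕜 := ℝ) x xn
    have h2 : HasFDerivAt (shift f) (shiftD f x)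
        (Function.update x (Fin.last (n + 1)) xn) := by
      rw [hux]; exact hasFDerivAt_shift hdf x
    have h3 : HasFDerivAt f (fderiv ℝ f (shift f x))
        (shift f (Function.update x (Fin.last (n + 1)) xn)) := by
      rw [hux]; exact (hdf _).hasFDerivAt
    have hcomp := h3.comp xn (h2.comp xn h1)
    have hde : (fderiv ℝ f (shift f x)).comp ((shiftD f x).comp (J (Fin.last (n + 1)))) =
        Q + R.comp P := by
      ext v
      simp only [ContinuousLinearMap.comp_apply, ContinuousLinearMap.add_apply]
      rw [key v, map_add, hQ, hR]
      simp
    rw [hde] at hcomp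
    exact hcomp.congr_of_eventuallyEq
      (by filter_upwards with z using by simp only [Function.comp_apply, hsnoc])
  -- the full derivative
  have hD : HasFDerivAt (fun z => autoreg 2 f id (Fin.snoc xs z))
      (ContinuousLinearMap.pi ![P, Q + R.comp P]) xn := by
    apply hasFDerivAt_pi''
    intro k
    rw [ContinuousLinearMap.proj_pi]
    fin_cases k
    · simpa [autoreg] using hc0
    · simpa [autoreg] using hc1
  have hDh : Dh = ContinuousLinearMap.pi ![P, Q + R.comp P] := hD.fderiv
  -- kernels
  have hker : ∀ v : EuclideanSpace ℝ (Fin d),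
      (ContinuousLinearMap.pi ![P, Q + R.comp P]) v = 0 ↔ (P v = 0 ∧ Q v = 0) := by
    intro v
    constructor
    · intro h
      have h0 := congrFun h 0
      have h1 := congrFun h 1
      simp only [ContinuousLinearMap.pi_apply, Matrix.cons_val_zero, Matrix.cons_val_one,
        Matrix.head_cons, Pi.zero_apply, ContinuousLinearMap.add_apply,
        ContinuousLinearMap.comp_apply] at h0 h1
      refine ⟨h0, ?_⟩
      rwa [h0, map_zero, add_zero] at h1
    · rintro ⟨h0, h1⟩
      funext j
      fin_cases j <;>
        simp [ContinuousLinearMap.pi_apply, h0, h1]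
  have hkD : LinearMap.ker (Dh : EuclideanSpace ℝ (Fin d) →ₗ[ℝ] (Fin 2 → EuclideanSpace ℝ (Fin d))) =
      LinearMap.ker (P : EuclideanSpace ℝ (Fin d) →ₗ[ℝ] EuclideanSpace ℝ (Fin d)) ⊓ LinearMap.ker (Q : EuclideanSpace ℝ (Fin d) →ₗ[ℝ] EuclideanSpace ℝ (Fin d)) := by
    ext v
    rw [hDh]
    simp only [LinearMap.mem_ker, Submodule.mem_inf, ContinuousLinearMap.coe_coe]
    exact hker v
  have hkT : LinearMap.ker (P.prod Q : EuclideanSpace ℝ (Fin d) →ₗ[ℝ] EuclideanSpace ℝ (Fin d) × EuclideanSpace ℝ (Fin d)) =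
      LinearMap.ker (P : EuclideanSpace ℝ (Fin d) →ₗ[ℝ] EuclideanSpace ℝ (Fin d)) ⊓ LinearMap.ker (Q : EuclideanSpace ℝ (Fin d) →ₗ[ℝ] EuclideanSpace ℝ (Fin d)) :=
    ContinuousLinearMap.ker_prod P Q
  refine ⟨?_, ?_, ?_⟩
  · show Function.Injective (Dh : EuclideanSpace ℝ (Fin d) →ₗ[ℝ] (Fin 2 → EuclideanSpace ℝ (Fin d))) ↔
      Function.Injective (P.prod Q : EuclideanSpace ℝ (Fin d) →ₗ[ℝ] EuclideanSpace ℝ (Fin d) × EuclideanSpace ℝ (Fin d))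
    rw [← LinearMap.ker_eq_bot, ← LinearMap.ker_eq_bot, hkD, hkT]
  · show Function.Injective (Dh : EuclideanSpace ℝ (Fin d) →ₗ[ℝ] (Fin 2 → EuclideanSpace ℝ (Fin d))) ↔ _
    rw [← LinearMap.ker_eq_bot, hkD]
  · have r1 := LinearMap.finrank_range_add_finrank_ker
      (Dh : EuclideanSpace ℝ (Fin d) →ₗ[ℝ] (Fin 2 → EuclideanSpace ℝ (Fin d)))
    have r2 := LinearMap.finrank_range_add_finrank_ker
      ((P.prod Q) : EuclideanSpace ℝ (Fin d) →ₗ[ℝ]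
        EuclideanSpace ℝ (Fin d) × EuclideanSpace ℝ (Fin d))
    have hk : Module.finrank ℝ (LinearMap.ker (Dh : EuclideanSpace ℝ (Fin d) →ₗ[ℝ] (Fin 2 → EuclideanSpace ℝ (Fin d)))) =
        Module.finrank ℝ (LinearMap.ker (P.prod Q : EuclideanSpace ℝ (Fin d) →ₗ[ℝ] EuclideanSpace ℝ (Fin d) × EuclideanSpace ℝ (Fin d))) := by rw [hkD, hkT]
    omega
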